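/- Let ε ≥ 0 and R > 0, and let w, ψ : ℝ × ℝ² → ℝ be smooth functions such that for every t ∈ ℝ: on Ω, ∂_t(w − ε·Δw) = (1/R)·Δw + R·ψ_θ + J(ψ, w − ε·Δw) and ∂_t(ε·Δ²ψ − Δψ) = −(1/R)·Δ²ψ + ε·R·Δ(w_θ) + J(Δψ − ε·Δ²ψ, ψ) + ε·J(Δw, w), and on ∂Ω, w(t,·) = 0, ψ(t,·) = 0 and ∇ψ(t,·) = 0. Define E(t) = ‖w‖² + ε‖∇w‖² + ‖∇ψ‖² + ε‖Δψ‖², I₁(t) = ‖∇w‖² + ‖Δψ‖², and I₂(t) = ⟨ψ_θ, w − ε·Δw⟩, where all spatial norms and inner products are taken at time t. Then for every t, E'(t) = −(2/R)·I₁(t) + 2R·I₂(t). -/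

import Mathlib

open MeasureTheory

noncomputable section

/-- Partial derivative with respect to the first (x) variable. -/
def pdx (f : ℝ × ℝ → ℝ) : ℝ × ℝ → ℝ := fun p => deriv (fun x => f (x, p.2)) p.1

/-- Partial derivative with respect to the second (y) variable. -/
def pdy (f : ℝ × ℝ → ℝ) : ℝ × ℝ → ℝ := fun p => deriv (fun y => f (p.1, y)) p.2

/-- The Laplacian Δf = f_xx + f_yy. -/
def lap (f : ℝ × ℝ → ℝ) : ℝ × ℝ → ℝ := fun p => pdx (pdx f) p + pdy (pdy f) p

/-- The azimuthal derivative f_θ = x f_y − y f_x. -/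
def azim (f : ℝ × ℝ → ℝ) : ℝ × ℝ → ℝ := fun p => p.1 * pdy f p - p.2 * pdx f p

/-- The Jacobian (advection) bilinear form J(f,g) = f_x g_y − f_y g_x. -/
def jac (f g : ℝ × ℝ → ℝ) : ℝ × ℝ → ℝ := fun p => pdx f p * pdy g p - pdy f p * pdx g p

/-- The open unit disk Ω. -/
def disk : Set (ℝ × ℝ) := {p | p.1 ^ 2 + p.2 ^ 2 < 1}

/-- The unit circle ∂Ω. -/
def bdry : Set (ℝ × ℝ) := {p | p.1 ^ 2 + p.2 ^ 2 = 1}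

/-- The L² inner product ⟨f,g⟩ = ∫_Ω f g dA. -/
def ip (f g : ℝ × ℝ → ℝ) : ℝ := ∫ p in disk, f p * g p

/-- The squared L² norm ‖f‖² over Ω. -/
def nsq (f : ℝ × ℝ → ℝ) : ℝ := ∫ p in disk, (f p) ^ 2

/-- The squared L² norm of the gradient: ‖∇f‖² = ‖f_x‖² + ‖f_y‖². -/
def gradNsq (f : ℝ × ℝ → ℝ) : ℝ := nsq (pdx f) + nsq (pdy f)

/-! ### Auxiliary machinery -/

abbrev SM {E : Type*} [NormedAddCommGroup E] [NormedSpace ℝ E] (f : E → ℝ) : Prop :=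
  ContDiff ℝ (⊤ : ℕ∞) f

section DV
variable {E : Type*} [NormedAddCommGroup E] [NormedSpace ℝ E] {f g : E → ℝ}

lemma hone : ((⊤ : ℕ∞) : WithTop ℕ∞) ≠ 0 := by simp

/-- Directional derivative. -/
def dv (v : E) (f : E → ℝ) : E → ℝ := fun q => fderiv ℝ f q v

lemma SM.dv (hf : SM f) (v : E) : SM (_root_.dv v f) :=
  (hf.fderiv_right (m := (⊤ : ℕ∞)) (by exact_mod_cast le_top)).clm_apply contDiff_const

lemma SM.diff (hf : SM f) : Differentiable ℝ f := hf.differentiable hone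

lemma dv_comm (hf : SM f) (u v : E) : dv u (dv v f) = dv v (dv u f) := by
  funext q
  have hd : ∀ y, HasFDerivAt f (fderiv ℝ f y) y := fun y => (hf.diff y).hasFDerivAt
  have hf' : ContDiff ℝ (⊤ : ℕ∞) (fderiv ℝ f) := hf.fderiv_right (by exact_mod_cast le_top)
  have hd2 : HasFDerivAt (fderiv ℝ f) (fderiv ℝ (fderiv ℝ f) q) q :=
    (hf'.differentiable hone q).hasFDerivAt
  have hsymm := second_derivative_symmetric hd hd2
  have key : ∀ a b : E, dv a (dv b f) q = fderiv ℝ (fderiv ℝ f) q a b := by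
    intro a b
    show fderiv ℝ (fun y => (fderiv ℝ f y) b) q a = _
    rw [fderiv_clm_apply (hf'.differentiable hone q) (differentiableAt_const b)]
    simp
  rw [key u v, key v u, hsymm]

lemma dv_mul (hf : SM f) (hg : SM g) (v : E) :
    dv v (fun q => f q * g q) = fun q => dv v f q * g q + f q * dv v g q := by
  funext q
  show fderiv ℝ (fun q => f q * g q) q v = _
  rw [fderiv_fun_mul (hf.diff q) (hg.diff q)]
  simp [dv]; ring

lemma dv_add (hf : SM f) (hg : SM g) (v : E) :
    dv v (fun q => f q + g q) = fun q => dv v f q + dv v g q := by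
  funext q
  show fderiv ℝ (fun q => f q + g q) q v = _
  rw [fderiv_fun_add (hf.diff q) (hg.diff q)]; rfl

lemma dv_sub (hf : SM f) (hg : SM g) (v : E) :
    dv v (fun q => f q - g q) = fun q => dv v f q - dv v g q := by
  funext q
  show fderiv ℝ (fun q => f q - g q) q v = _
  rw [fderiv_fun_sub (hf.diff q) (hg.diff q)]; rfl

lemma dv_cmul (hf : SM f) (c : ℝ) (v : E) :
    dv v (fun q => c * f q) = fun q => c * dv v f q := by
  funext q
  show fderiv ℝ (fun q => c * f q) q v = _
  rw [fderiv_const_mul (hf.diff q)]; rfl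

lemma dv_const {c : ℝ} (v : E) : dv v (fun _ => c) = fun _ => 0 := by
  funext q
  show fderiv ℝ (fun _ => c) q v = 0
  simp

lemma SM.mul (hf : SM f) (hg : SM g) : SM fun p => f p * g p := ContDiff.mul hf hg
lemma SM.add (hf : SM f) (hg : SM g) : SM fun p => f p + g p := ContDiff.add hf hg
lemma SM.sub (hf : SM f) (hg : SM g) : SM fun p => f p - g p := ContDiff.sub hf hg
lemma SM.neg (hf : SM f) : SM fun p => -f p := ContDiff.neg hf
lemma SM_const {c : ℝ} : SM fun _ : E => c := contDiff_const
end DV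

lemma SM_fst : SM fun p : ℝ × ℝ => p.1 := contDiff_fst
lemma SM_snd : SM fun p : ℝ × ℝ => p.2 := contDiff_snd

section Spatial
variable {f g : ℝ × ℝ → ℝ}

lemma sliceX (hf : SM f) (p : ℝ × ℝ) : HasDerivAt (fun x => f (x, p.2)) (pdx f p) p.1 := by
  have : DifferentiableAt ℝ (fun x : ℝ => f (x, p.2)) p.1 :=
    (hf.diff (p.1, p.2)).comp p.1
      (((differentiable_id (𝕜 := ℝ) (E := ℝ)).prodMk (differentiable_const p.2)) p.1)
  exact this.hasDerivAt

lemma sliceY (hf : SM f) (p : ℝ × ℝ) : HasDerivAt (fun y => f (p.1, y)) (pdy f p) p.2 := by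
  have : DifferentiableAt ℝ (fun y : ℝ => f (p.1, y)) p.2 :=
    (hf.diff (p.1, p.2)).comp p.2
      (((differentiable_const p.1).prodMk (differentiable_id (𝕜 := ℝ) (E := ℝ))) p.2)
  exact this.hasDerivAt

lemma pdx_eq_dv (hf : SM f) : pdx f = dv ((1 : ℝ), (0 : ℝ)) f := by
  funext p
  have line : HasDerivAt (fun x : ℝ => (x, p.2)) ((1 : ℝ), (0 : ℝ)) p.1 := by
    simpa using (hasDerivAt_id p.1).prodMk (hasDerivAt_const p.1 p.2)
  have := ((hf.diff (p.1, p.2)).hasFDerivAt.comp_hasDerivAt p.1 line).deriv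
  simpa [pdx, dv, Function.comp_def] using this

lemma pdy_eq_dv (hf : SM f) : pdy f = dv ((0 : ℝ), (1 : ℝ)) f := by
  funext p
  have line : HasDerivAt (fun y : ℝ => (p.1, y)) ((0 : ℝ), (1 : ℝ)) p.2 := by
    simpa using (hasDerivAt_const p.2 p.1).prodMk (hasDerivAt_id p.2)
  have := ((hf.diff (p.1, p.2)).hasFDerivAt.comp_hasDerivAt p.2 line).deriv
  simpa [pdy, dv, Function.comp_def] using this

lemma SM.pdx (hf : SM f) : SM (_root_.pdx f) := by rw [pdx_eq_dv hf]; exact hf.dv _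
lemma SM.pdy (hf : SM f) : SM (_root_.pdy f) := by rw [pdy_eq_dv hf]; exact hf.dv _

lemma pdy_pdx (hf : SM f) : pdy (pdx f) = pdx (pdy f) := by
  rw [pdx_eq_dv hf, pdy_eq_dv (hf.dv _), pdy_eq_dv hf, pdx_eq_dv (hf.dv _), dv_comm hf]

lemma SM.lap (hf : SM f) : SM (_root_.lap f) := hf.pdx.pdx.add hf.pdy.pdy
lemma SM.azim (hf : SM f) : SM (_root_.azim f) := (SM_fst.mul hf.pdy).sub (SM_snd.mul hf.pdx)
lemma SM.jac (hf : SM f) (hg : SM g) : SM (_root_.jac f g) :=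
  (hf.pdx.mul hg.pdy).sub (hf.pdy.mul hg.pdx)

/- function-level pointwise expansion rules -/
lemma pdx_mul (hf : SM f) (hg : SM g) :
    pdx (fun q => f q * g q) = fun p => pdx f p * g p + f p * pdx g p := by
  funext p
  have := ((sliceX hf p).fun_mul (sliceX hg p)).deriv
  simpa [pdx] using this

lemma pdy_mul (hf : SM f) (hg : SM g) :
    pdy (fun q => f q * g q) = fun p => pdy f p * g p + f p * pdy g p := by
  funext p
  have := ((sliceY hf p).fun_mul (sliceY hg p)).deriv
  simpa [pdy] using this

lemma pdx_add (hf : SM f) (hg : SM g) :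
    pdx (fun q => f q + g q) = fun p => pdx f p + pdx g p := by
  funext p
  have := ((sliceX hf p).fun_add (sliceX hg p)).deriv
  simpa [pdx] using this

lemma pdy_add (hf : SM f) (hg : SM g) :
    pdy (fun q => f q + g q) = fun p => pdy f p + pdy g p := by
  funext p
  have := ((sliceY hf p).fun_add (sliceY hg p)).deriv
  simpa [pdy] using this

lemma pdx_sub (hf : SM f) (hg : SM g) :
    pdx (fun q => f q - g q) = fun p => pdx f p - pdx g p := by
  funext p
  have := ((sliceX hf p).fun_sub (sliceX hg p)).deriv
  simpa [pdx] using this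

lemma pdy_sub (hf : SM f) (hg : SM g) :
    pdy (fun q => f q - g q) = fun p => pdy f p - pdy g p := by
  funext p
  have := ((sliceY hf p).fun_sub (sliceY hg p)).deriv
  simpa [pdy] using this

lemma pdx_const {c : ℝ} : pdx (fun _ => c) = fun _ => 0 := by funext p; simp [pdx]
lemma pdy_const {c : ℝ} : pdy (fun _ => c) = fun _ => 0 := by funext p; simp [pdy]
lemma pdx_coord1 : pdx (fun q => q.1) = fun _ => 1 := by funext p; simp [pdx]
lemma pdy_coord1 : pdy (fun q => q.1) = fun _ => 0 := by funext p; simp [pdy]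
lemma pdx_coord2 : pdx (fun q => q.2) = fun _ => 0 := by funext p; simp [pdx]
lemma pdy_coord2 : pdy (fun q => q.2) = fun _ => 1 := by funext p; simp [pdy]

end Spatial

/-! ### integration infrastructure -/

lemma isOpen_disk : IsOpen disk := by
  have : Continuous fun p : ℝ × ℝ => p.1 ^ 2 + p.2 ^ 2 := by fun_prop
  exact isOpen_lt this continuous_const

lemma disk_subset : disk ⊆ Metric.closedBall (0 : ℝ × ℝ) 1 := by
  intro p hp
  simp only [Metric.mem_closedBall, dist_zero_right, Prod.norm_def, max_le_iff]
  have h : p.1 ^ 2 + p.2 ^ 2 < 1 := hp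
  constructor <;> rw [Real.norm_eq_abs, abs_le] <;> constructor <;>
    nlinarith [sq_nonneg p.1, sq_nonneg p.2]

lemma intg {f : ℝ × ℝ → ℝ} (hf : Continuous f) : IntegrableOn f disk volume :=
  (hf.continuousOn.integrableOn_compact (isCompact_closedBall _ _)).mono_set disk_subset

lemma measure_disk_lt_top : volume disk < ⊤ :=
  (measure_mono disk_subset).trans_lt (measure_closedBall_lt_top)

lemma div_x {h : ℝ × ℝ → ℝ} (hsm : SM h) (hb : ∀ p ∈ bdry, h p = 0) :
    ∫ p in disk, pdx h p = 0 := by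
  have hcont : Continuous (pdx h) := hsm.pdx.continuous
  have hint : Integrable (disk.indicator (pdx h)) volume := by
    rw [integrable_indicator_iff isOpen_disk.measurableSet]; exact intg hcont
  rw [← integral_indicator isOpen_disk.measurableSet]
  rw [MeasureTheory.Measure.volume_eq_prod] at hint ⊢
  rw [MeasureTheory.integral_prod_symm _ hint]
  have inner_zero : ∀ y : ℝ, (∫ x : ℝ, disk.indicator (pdx h) (x, y)) = 0 := by
    intro y
    by_cases hy : 1 - y ^ 2 ≤ 0
    · have : (fun x : ℝ => disk.indicator (pdx h) (x, y)) = fun _ => 0 := by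
        funext x
        have : (x, y) ∉ disk := by
          simp only [disk, Set.mem_setOf_eq]; push_neg; nlinarith [sq_nonneg x]
        simp [Set.indicator_of_notMem this]
      rw [this, integral_zero]
    · push_neg at hy
      set c := Real.sqrt (1 - y ^ 2) with hc
      have hc2 : c ^ 2 = 1 - y ^ 2 := Real.sq_sqrt (by linarith)
      have hcpos : 0 < c := Real.sqrt_pos.mpr (by linarith)
      have hset : (fun x : ℝ => disk.indicator (pdx h) (x, y))
          = (Set.Ioo (-c) c).indicator (fun x => pdx h (x, y)) := by
        funext x
        have hmem : (x, y) ∈ disk ↔ x ∈ Set.Ioo (-c) c := by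
          simp only [disk, Set.mem_setOf_eq, Set.mem_Ioo]
          constructor
          · intro hx
            have : x ^ 2 < c ^ 2 := by rw [hc2]; linarith
            constructor <;> nlinarith
          · intro ⟨h1, h2⟩
            have : x ^ 2 < c ^ 2 := by nlinarith
            rw [hc2] at this; linarith
        by_cases hx : (x, y) ∈ disk
        · rw [Set.indicator_of_mem hx, Set.indicator_of_mem (hmem.mp hx)]
        · rw [Set.indicator_of_notMem hx, Set.indicator_of_notMem (fun hh => hx (hmem.mpr hh))]
      rw [hset, integral_indicator measurableSet_Ioo]
      rw [← MeasureTheory.integral_Ioc_eq_integral_Ioo,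
        ← intervalIntegral.integral_of_le (by linarith : -c ≤ c)]
      have hderiv : (fun x => pdx h (x, y)) = deriv (fun x => h (x, y)) := by
        funext x; rfl
      rw [hderiv]
      rw [intervalIntegral.integral_deriv_eq_sub
        (fun x _ => ((sliceX hsm (x, y)).differentiableAt : DifferentiableAt ℝ _ x))
        (by rw [← hderiv]
            exact ((hsm.pdx.continuous.comp (by fun_prop)).intervalIntegrable _ _))]
      have h1 : h (c, y) = 0 := hb _ (by simp only [bdry, Set.mem_setOf_eq]; rw [hc2]; ring)
      have h2 : h (-c, y) = 0 := hb _ (by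
        simp only [bdry, Set.mem_setOf_eq]; rw [neg_pow]; nlinarith [hc2])
      rw [h1, h2, sub_zero]
  simp only [inner_zero, integral_zero]

lemma div_y {h : ℝ × ℝ → ℝ} (hsm : SM h) (hb : ∀ p ∈ bdry, h p = 0) :
    ∫ p in disk, pdy h p = 0 := by
  have hcont : Continuous (pdy h) := hsm.pdy.continuous
  have hint : Integrable (disk.indicator (pdy h)) volume := by
    rw [integrable_indicator_iff isOpen_disk.measurableSet]; exact intg hcont
  rw [← integral_indicator isOpen_disk.measurableSet]
  rw [MeasureTheory.Measure.volume_eq_prod] at hint ⊢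
  rw [MeasureTheory.integral_prod _ hint]
  have inner_zero : ∀ x : ℝ, (∫ y : ℝ, disk.indicator (pdy h) (x, y)) = 0 := by
    intro x
    by_cases hy : 1 - x ^ 2 ≤ 0
    · have : (fun y : ℝ => disk.indicator (pdy h) (x, y)) = fun _ => 0 := by
        funext y
        have : (x, y) ∉ disk := by
          simp only [disk, Set.mem_setOf_eq]; push_neg; nlinarith [sq_nonneg y]
        simp [Set.indicator_of_notMem this]
      rw [this, integral_zero]
    · push_neg at hy
      set c := Real.sqrt (1 - x ^ 2) with hc
      have hc2 : c ^ 2 = 1 - x ^ 2 := Real.sq_sqrt (by linarith)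
      have hcpos : 0 < c := Real.sqrt_pos.mpr (by linarith)
      have hset : (fun y : ℝ => disk.indicator (pdy h) (x, y))
          = (Set.Ioo (-c) c).indicator (fun y => pdy h (x, y)) := by
        funext y
        have hmem : (x, y) ∈ disk ↔ y ∈ Set.Ioo (-c) c := by
          simp only [disk, Set.mem_setOf_eq, Set.mem_Ioo]
          constructor
          · intro hx
            have : y ^ 2 < c ^ 2 := by rw [hc2]; linarith
            constructor <;> nlinarith
          · intro ⟨h1, h2⟩
            have : y ^ 2 < c ^ 2 := by nlinarith
            rw [hc2] at this; linarith
        by_cases hx : (x, y) ∈ disk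
        · rw [Set.indicator_of_mem hx, Set.indicator_of_mem (hmem.mp hx)]
        · rw [Set.indicator_of_notMem hx, Set.indicator_of_notMem (fun hh => hx (hmem.mpr hh))]
      rw [hset, integral_indicator measurableSet_Ioo]
      rw [← MeasureTheory.integral_Ioc_eq_integral_Ioo,
        ← intervalIntegral.integral_of_le (by linarith : -c ≤ c)]
      have hderiv : (fun y => pdy h (x, y)) = deriv (fun y => h (x, y)) := by
        funext y; rfl
      rw [hderiv]
      rw [intervalIntegral.integral_deriv_eq_sub
        (fun y _ => ((sliceY hsm (x, y)).differentiableAt : DifferentiableAt ℝ _ y))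
        (by rw [← hderiv]
            exact ((hsm.pdy.continuous.comp (by fun_prop)).intervalIntegrable _ _))]
      have h1 : h (x, c) = 0 := hb _ (by simp only [bdry, Set.mem_setOf_eq]; rw [hc2]; ring)
      have h2 : h (x, -c) = 0 := hb _ (by
        simp only [bdry, Set.mem_setOf_eq]; rw [neg_pow]; nlinarith [hc2])
      rw [h1, h2, sub_zero]
  simp only [inner_zero, integral_zero]

lemma key_move {X Y F G : ℝ × ℝ → ℝ} (hX : Continuous X) (hY : Continuous Y)
    (hF : SM F) (hG : SM G) (hFb : ∀ p ∈ bdry, F p = 0) (hGb : ∀ p ∈ bdry, G p = 0)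
    (hpt : ∀ p, X p - Y p = pdx F p + pdy G p) :
    ∫ p in disk, X p = ∫ p in disk, Y p := by
  have h1 : ∫ p in disk, (X p - Y p) = 0 := by
    have e1 : ∫ p in disk, (X p - Y p) = ∫ p in disk, (pdx F p + pdy G p) := by
      refine setIntegral_congr_fun isOpen_disk.measurableSet fun p _ => hpt p
    rw [e1, integral_add (intg hF.pdx.continuous) (intg hG.pdy.continuous),
      div_x hF hFb, div_y hG hGb, add_zero]
  have h2 := integral_sub (intg hX) (intg hY)
  rw [h2] at h1
  linarith

/-! ### time-dependence infrastructure -/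

section Time
variable {W : ℝ × (ℝ × ℝ) → ℝ}

def eT : ℝ × (ℝ × ℝ) := (1, (0, 0))
def eX : ℝ × (ℝ × ℝ) := (0, (1, 0))
def eY : ℝ × (ℝ × ℝ) := (0, (0, 1))

lemma SM_restr (hW : SM W) (t : ℝ) : SM fun p => W (t, p) :=
  hW.comp (contDiff_const.prodMk contDiff_id)

lemma cont_restr (hW : SM W) (t : ℝ) : Continuous fun p => W (t, p) :=
  (SM_restr hW t).continuous

lemma pdx_restr (hW : SM W) (t : ℝ) :
    pdx (fun p => W (t, p)) = fun p => dv eX W (t, p) := by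
  funext p
  have line : HasDerivAt (fun x : ℝ => ((t, (x, p.2)) : ℝ × (ℝ × ℝ))) eX p.1 := by
    simpa [eX] using
      (hasDerivAt_const p.1 t).prodMk ((hasDerivAt_id p.1).prodMk (hasDerivAt_const p.1 p.2))
  have := ((hW.diff (t, (p.1, p.2))).hasFDerivAt.comp_hasDerivAt p.1 line).deriv
  simpa [pdx, dv, Function.comp_def] using this

lemma pdy_restr (hW : SM W) (t : ℝ) :
    pdy (fun p => W (t, p)) = fun p => dv eY W (t, p) := by
  funext p
  have line : HasDerivAt (fun y : ℝ => ((t, (p.1, y)) : ℝ × (ℝ × ℝ))) eY p.2 := by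
    simpa [eY] using
      (hasDerivAt_const p.2 t).prodMk ((hasDerivAt_const p.2 p.1).prodMk (hasDerivAt_id p.2))
  have := ((hW.diff (t, (p.1, p.2))).hasFDerivAt.comp_hasDerivAt p.2 line).deriv
  simpa [pdy, dv, Function.comp_def] using this

lemma hasDerivAt_time (hW : SM W) (p : ℝ × ℝ) (t : ℝ) :
    HasDerivAt (fun s => W (s, p)) (dv eT W (t, p)) t := by
  have line : HasDerivAt (fun s : ℝ => ((s, p) : ℝ × (ℝ × ℝ))) eT t := by
    simpa [eT, Prod.mk_zero_zero] using (hasDerivAt_id t).prodMk (hasDerivAt_const t p)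
  exact (hW.diff (t, p)).hasFDerivAt.comp_hasDerivAt t line

lemma deriv_time (hW : SM W) (p : ℝ × ℝ) (t : ℝ) :
    deriv (fun s => W (s, p)) t = dv eT W (t, p) := (hasDerivAt_time hW p t).deriv

lemma hasDerivAt_setIntegral (hW : SM W) (t : ℝ) :
    HasDerivAt (fun s => ∫ p in disk, W (s, p)) (∫ p in disk, dv eT W (t, p)) t := by
  have hK : IsCompact ((Set.Icc (t - 1) (t + 1)) ×ˢ Metric.closedBall (0 : ℝ × ℝ) 1) :=
    isCompact_Icc.prod (isCompact_closedBall _ _)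
  obtain ⟨C, hC⟩ := hK.exists_bound_of_continuousOn ((hW.dv eT).continuous.continuousOn)
  have main := hasDerivAt_integral_of_dominated_loc_of_deriv_le (μ := volume.restrict disk)
    (F := fun s p => W (s, p)) (F' := fun s p => dv eT W (s, p)) (x₀ := t)
    (bound := fun _ => C) (s := Metric.ball t 1) (Metric.ball_mem_nhds t one_pos)
    (Filter.Eventually.of_forall fun s => (cont_restr hW s).aestronglyMeasurable)
    (intg (cont_restr hW t))
    (((hW.dv eT).continuous.comp (continuous_const.prodMk continuous_id)).aestronglyMeasurable)
    (ae_restrict_of_forall_mem isOpen_disk.measurableSet fun p hp => by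
      intro s hs
      refine hC (s, p) ⟨?_, disk_subset hp⟩
      have := Metric.mem_ball.mp hs
      rw [Real.dist_eq] at this
      constructor <;> [linarith [abs_le.mp this.le |>.1]; linarith [abs_le.mp this.le |>.2]])
    (integrableOn_const measure_disk_lt_top.ne)
    (ae_restrict_of_forall_mem isOpen_disk.measurableSet fun p _ => fun s _ =>
      hasDerivAt_time hW p s)
  exact main.2

end Time

lemma lap_def (f : ℝ × ℝ → ℝ) : lap f = fun p => pdx (pdx f) p + pdy (pdy f) p := rfl
lemma azim_def (f : ℝ × ℝ → ℝ) : azim f = fun p => p.1 * pdy f p - p.2 * pdx f p := rfl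
lemma jac_def (f g : ℝ × ℝ → ℝ) : jac f g = fun p => pdx f p * pdy g p - pdy f p * pdx g p := rfl

section Time2
variable {W : ℝ × (ℝ × ℝ) → ℝ}

lemma lap_restr (hW : SM W) (s : ℝ) :
    lap (fun p => W (s, p)) = fun p => dv eX (dv eX W) (s, p) + dv eY (dv eY W) (s, p) := by
  simp only [lap_def, pdx_restr hW, pdx_restr (hW.dv eX), pdy_restr hW, pdy_restr (hW.dv eY)]

lemma dv_TX {f : ℝ × (ℝ × ℝ) → ℝ} (hf : SM f) : dv eT (dv eX f) = dv eX (dv eT f) :=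
  dv_comm hf eT eX

lemma dv_TY {f : ℝ × (ℝ × ℝ) → ℝ} (hf : SM f) : dv eT (dv eY f) = dv eY (dv eT f) :=
  dv_comm hf eT eY

lemma deriv_sub_lap (hW : SM W) (ε : ℝ) (p : ℝ × ℝ) (t : ℝ) :
    deriv (fun s => W (s, p) - ε * lap (fun p' => W (s, p')) p) t
      = dv eT W (t, p) - ε * lap (fun p' => dv eT W (t, p')) p := by
  have hL : SM fun q => dv eX (dv eX W) q + dv eY (dv eY W) q :=
    ((hW.dv eX).dv eX).add ((hW.dv eY).dv eY)
  have hU : SM fun q => W q - ε * (dv eX (dv eX W) q + dv eY (dv eY W) q) :=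
    hW.sub (SM_const.mul hL)
  have h1 : (fun s => W (s, p) - ε * lap (fun p' => W (s, p')) p)
      = fun s => (fun q => W q - ε * (dv eX (dv eX W) q + dv eY (dv eY W) q)) (s, p) := by
    funext s
    simp only [lap_restr hW]
  rw [h1, deriv_time hU p t]
  simp (config := { maxDischargeDepth := 100 }) only [lap_restr (hW.dv eT),
    dv_sub, dv_add, dv_mul, dv_cmul, dv_const, dv_TX, dv_TY, SM.dv, SM.mul, SM.add, SM.sub,
    SM_const, hW]
  ring

lemma deriv_lap2 (hW : SM W) (ε : ℝ) (p : ℝ × ℝ) (t : ℝ) :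
    deriv (fun s => ε * lap (lap (fun p' => W (s, p'))) p - lap (fun p' => W (s, p')) p) t
      = ε * lap (lap (fun p' => dv eT W (t, p'))) p - lap (fun p' => dv eT W (t, p')) p := by
  have hL : SM fun q => dv eX (dv eX W) q + dv eY (dv eY W) q :=
    ((hW.dv eX).dv eX).add ((hW.dv eY).dv eY)
  have hLL : SM fun q =>
      dv eX (dv eX fun q => dv eX (dv eX W) q + dv eY (dv eY W) q) q
      + dv eY (dv eY fun q => dv eX (dv eX W) q + dv eY (dv eY W) q) q :=
    ((hL.dv eX).dv eX).add ((hL.dv eY).dv eY)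
  have hU : SM fun q => ε * ((fun q =>
      dv eX (dv eX fun q => dv eX (dv eX W) q + dv eY (dv eY W) q) q
      + dv eY (dv eY fun q => dv eX (dv eX W) q + dv eY (dv eY W) q) q) q)
      - (fun q => dv eX (dv eX W) q + dv eY (dv eY W) q) q :=
    (SM_const.mul hLL).sub hL
  have h1 : (fun s => ε * lap (lap (fun p' => W (s, p'))) p - lap (fun p' => W (s, p')) p)
      = fun s => (fun q => ε * ((fun q =>
          dv eX (dv eX fun q => dv eX (dv eX W) q + dv eY (dv eY W) q) q
          + dv eY (dv eY fun q => dv eX (dv eX W) q + dv eY (dv eY W) q) q) q)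
          - (fun q => dv eX (dv eX W) q + dv eY (dv eY W) q) q) (s, p) := by
    funext s
    simp only [lap_restr hW, lap_restr hL]
  rw [h1, deriv_time hU p t]
  simp (config := { maxDischargeDepth := 100 }) only [lap_restr (hW.dv eT),
    lap_restr (((hW.dv eT).dv eX).dv eX |>.add (((hW.dv eT).dv eY).dv eY)),
    dv_sub, dv_add, dv_mul, dv_cmul, dv_const, dv_TX, dv_TY, SM.dv, SM.mul, SM.add, SM.sub,
    SM_const, hW]
  ring

end Time2

lemma main_spatial (ε R : ℝ) (a at' b bt' : ℝ × ℝ → ℝ)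
    (ha : SM a) (hat : SM at') (hb : SM b) (hbt : SM bt')
    (hK1 : ∀ p ∈ disk, at' p - ε * lap at' p
      = (1/R) * lap a p + R * azim b p + jac b (fun q => a q - ε * lap a q) p)
    (hK2 : ∀ p ∈ disk, ε * lap (lap bt') p - lap bt' p
      = -(1/R) * lap (lap b) p + ε*R*lap (azim a) p
        + jac (fun q => lap b q - ε * lap (lap b) q) b p + ε * jac (lap a) a p)
    (hbd : ∀ p ∈ bdry, a p = 0 ∧ b p = 0 ∧ pdx b p = 0 ∧ pdy b p = 0) :
    ∫ p in disk, (2*(a p*at' p) + 2*ε*(pdx a p*pdx at' p + pdy a p*pdy at' p)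
      + 2*(pdx b p*pdx bt' p + pdy b p*pdy bt' p) + 2*ε*(lap b p*lap bt' p))
    = -(2/R) * (gradNsq a + nsq (lap b))
      + 2*R*ip (azim b) (fun q => a q - ε * lap a q) := by
  have hX1 : SM fun p => 2*(a p*at' p) + 2*ε*(pdx a p*pdx at' p + pdy a p*pdy at' p)
      + 2*(pdx b p*pdx bt' p + pdy b p*pdy bt' p) + 2*ε*(lap b p*lap bt' p) := by
    simp (config := { maxDischargeDepth := 100 }) only [SM.mul, SM.add, SM.sub, SM.lap,
      SM.azim, SM.jac, SM_const, SM_fst, SM_snd, SM.pdx, SM.pdy, ha, hat, hb, hbt]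
  have hY1 : SM fun p => 2*(a p*(at' p - ε * lap at' p))
      + 2*(b p*(ε * lap (lap bt') p - lap bt' p)) := by
    simp (config := { maxDischargeDepth := 100 }) only [SM.mul, SM.add, SM.sub, SM.lap,
      SM.azim, SM.jac, SM_const, SM_fst, SM_snd, SM.pdx, SM.pdy, ha, hat, hb, hbt]
  have hF1 : SM fun p => 2*ε*(a p*pdx at' p) + 2*(b p*pdx bt' p)
      + 2*ε*(pdx b p*lap bt' p - b p*pdx (lap bt') p) := by
    simp (config := { maxDischargeDepth := 100 }) only [SM.mul, SM.add, SM.sub, SM.lap,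
      SM.azim, SM.jac, SM_const, SM_fst, SM_snd, SM.pdx, SM.pdy, ha, hat, hb, hbt]
  have hG1 : SM fun p => 2*ε*(a p*pdy at' p) + 2*(b p*pdy bt' p)
      + 2*ε*(pdy b p*lap bt' p - b p*pdy (lap bt') p) := by
    simp (config := { maxDischargeDepth := 100 }) only [SM.mul, SM.add, SM.sub, SM.lap,
      SM.azim, SM.jac, SM_const, SM_fst, SM_snd, SM.pdx, SM.pdy, ha, hat, hb, hbt]
  have step1 : ∫ p in disk, (2*(a p*at' p) + 2*ε*(pdx a p*pdx at' p + pdy a p*pdy at' p)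
        + 2*(pdx b p*pdx bt' p + pdy b p*pdy bt' p) + 2*ε*(lap b p*lap bt' p))
      = ∫ p in disk, (2*(a p*(at' p - ε * lap at' p))
        + 2*(b p*(ε * lap (lap bt') p - lap bt' p))) := by
    apply key_move hX1.continuous hY1.continuous hF1 hG1
    · intro p hp
      obtain ⟨h1, h2, h3, h4⟩ := hbd p hp
      rw [h1, h2, h3]; ring
    · intro p hp
      obtain ⟨h1, h2, h3, h4⟩ := hbd p hp
      rw [h1, h2, h4]; ring
    · intro p
      simp (config := { maxDischargeDepth := 100 }) only [lap_def, azim_def, jac_def, pdx_mul, pdy_mul, pdx_add,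
        pdy_add, pdx_sub, pdy_sub, pdx_const, pdy_const, pdx_coord1, pdy_coord1, pdx_coord2,
        pdy_coord2, pdy_pdx, SM.mul, SM.add, SM.sub, SM.lap, SM.azim, SM.jac, SM_const, SM_fst, SM_snd, SM.pdx, SM.pdy,
        ha, hat, hb, hbt]
      ring
  -- step 2 : substitute the equations of motion
  have step2 : ∫ p in disk, (2*(a p*(at' p - ε * lap at' p))
        + 2*(b p*(ε * lap (lap bt') p - lap bt' p)))
      = ∫ p in disk, (2*(a p*((1/R) * lap a p + R * azim b p
          + jac b (fun q => a q - ε * lap a q) p))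
        + 2*(b p*(-(1/R) * lap (lap b) p + ε*R*lap (azim a) p
          + jac (fun q => lap b q - ε * lap (lap b) q) b p + ε * jac (lap a) a p))) := by
    refine setIntegral_congr_fun isOpen_disk.measurableSet fun p hp => ?_
    rw [hK1 p hp, hK2 p hp]
  -- step 3 : integrate by parts down to the target
  have hZ : SM fun p => 2*(a p*((1/R) * lap a p + R * azim b p
        + jac b (fun q => a q - ε * lap a q) p))
      + 2*(b p*(-(1/R) * lap (lap b) p + ε*R*lap (azim a) p
        + jac (fun q => lap b q - ε * lap (lap b) q) b p + ε * jac (lap a) a p)) := by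
    simp (config := { maxDischargeDepth := 100 }) only [SM.mul, SM.add, SM.sub, SM.neg, SM.lap,
      SM.azim, SM.jac, SM_const, SM_fst, SM_snd, SM.pdx, SM.pdy, ha, hat, hb, hbt,
      neg_mul, neg_div]
  have hT : SM fun p => -(2/R)*((pdx a p)^2+(pdy a p)^2+(lap b p)^2)
      + 2*R*(azim b p*(a p - ε * lap a p)) := by
    simp (config := { maxDischargeDepth := 100 }) only [pow_two, SM.mul, SM.add, SM.sub, SM.neg,
      SM.lap, SM.azim, SM.jac, SM_const, SM_fst, SM_snd, SM.pdx, SM.pdy, ha, hat, hb, hbt,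
      neg_mul, neg_div]
  have hF2 : SM fun p =>
      (2/R)*(a p*pdx a p)
      + (2/R)*(pdx b p*lap b p - b p*pdx (lap b) p)
      - b p*b p*pdy (fun q => lap b q - ε*lap (lap b) q) p
      + 2*ε*R*((b p*pdx (azim a) p - pdx b p*azim a p) - p.2*(lap b p*a p)
          - (pdx (azim b) p*a p - azim b p*pdx a p))
      + b p*pdy (fun q => a q*a q) p
      - 2*ε*(a p*(b p*pdy (lap a) p)) := by
    simp (config := { maxDischargeDepth := 100 }) only [SM.mul, SM.add, SM.sub, SM.neg, SM.lap,
      SM.azim, SM.jac, SM_const, SM_fst, SM_snd, SM.pdx, SM.pdy, ha, hat, hb, hbt]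
  have hG2 : SM fun p =>
      (2/R)*(a p*pdy a p)
      + (2/R)*(pdy b p*lap b p - b p*pdy (lap b) p)
      + b p*b p*pdx (fun q => lap b q - ε*lap (lap b) q) p
      + 2*ε*R*((b p*pdy (azim a) p - pdy b p*azim a p) + p.1*(lap b p*a p)
          - (pdy (azim b) p*a p - azim b p*pdy a p))
      - b p*pdx (fun q => a q*a q) p
      + 2*ε*(a p*(b p*pdx (lap a) p)) := by
    simp (config := { maxDischargeDepth := 100 }) only [SM.mul, SM.add, SM.sub, SM.neg, SM.lap,
      SM.azim, SM.jac, SM_const, SM_fst, SM_snd, SM.pdx, SM.pdy, ha, hat, hb, hbt]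
  have step3 : ∫ p in disk, (2*(a p*((1/R) * lap a p + R * azim b p
          + jac b (fun q => a q - ε * lap a q) p))
        + 2*(b p*(-(1/R) * lap (lap b) p + ε*R*lap (azim a) p
          + jac (fun q => lap b q - ε * lap (lap b) q) b p + ε * jac (lap a) a p)))
      = ∫ p in disk, (-(2/R)*((pdx a p)^2+(pdy a p)^2+(lap b p)^2)
        + 2*R*(azim b p*(a p - ε * lap a p))) := by
    apply key_move hZ.continuous hT.continuous hF2 hG2
    · intro p hp
      obtain ⟨h1, h2, h3, h4⟩ := hbd p hp
      simp only [azim_def]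
      rw [h1, h2, h3, h4]; ring
    · intro p hp
      obtain ⟨h1, h2, h3, h4⟩ := hbd p hp
      simp only [azim_def]
      rw [h1, h2, h3, h4]; ring
    · intro p
      simp (config := { maxDischargeDepth := 100 }) only [lap_def, azim_def, jac_def, pdx_mul,
        pdy_mul, pdx_add, pdy_add, pdx_sub, pdy_sub, pdx_const, pdy_const, pdx_coord1,
        pdy_coord1, pdx_coord2, pdy_coord2, pdy_pdx, SM.mul, SM.add, SM.sub, SM.lap, SM.azim,
        SM.jac, SM_const, SM_fst, SM_snd, SM.pdx, SM.pdy, ha, hat, hb, hbt]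
      ring
  rw [step1, step2, step3]
  have i1 : IntegrableOn (fun p => (pdx a p)^2) disk volume := intg (ha.pdx.continuous.pow 2)
  have i2 : IntegrableOn (fun p => (pdy a p)^2) disk volume := intg (ha.pdy.continuous.pow 2)
  have i3 : IntegrableOn (fun p => (lap b p)^2) disk volume := intg (hb.lap.continuous.pow 2)
  have i4 : IntegrableOn (fun p => azim b p * (a p - ε * lap a p)) disk volume :=
    intg (hb.azim.continuous.mul (ha.continuous.sub (continuous_const.mul ha.lap.continuous)))
  have i12 : IntegrableOn (fun p => (pdx a p)^2 + (pdy a p)^2) disk volume := i1.add i2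
  have i123 : IntegrableOn (fun p => (pdx a p)^2 + (pdy a p)^2 + (lap b p)^2) disk volume :=
    i12.add i3
  have iL : IntegrableOn (fun p => -(2/R)*((pdx a p)^2+(pdy a p)^2+(lap b p)^2)) disk volume :=
    i123.const_mul _
  have iR : IntegrableOn (fun p => 2*R*(azim b p*(a p - ε * lap a p))) disk volume :=
    i4.const_mul _
  have e1 : ∫ p in disk, (-(2/R)*((pdx a p)^2+(pdy a p)^2+(lap b p)^2)
        + 2*R*(azim b p*(a p - ε * lap a p)))
      = -(2/R) * (∫ p in disk, ((pdx a p)^2+(pdy a p)^2+(lap b p)^2))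
        + 2*R*(∫ p in disk, azim b p*(a p - ε * lap a p)) := by
    rw [integral_add iL iR, integral_const_mul, integral_const_mul]
  rw [e1, integral_add i12 i3, integral_add i1 i2]
  simp only [gradNsq, nsq, ip]

lemma energy_core (ε R : ℝ) (W P : ℝ × (ℝ × ℝ) → ℝ) (hW : SM W) (hP : SM P) (t : ℝ)
    (heq1 : ∀ p ∈ disk,
      deriv (fun s => W (s, p) - ε * lap (fun p' => W (s, p')) p) t
        = (1 / R) * lap (fun p' => W (t, p')) p + R * azim (fun p' => P (t, p')) p
          + jac (fun p' => P (t, p'))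
              (fun q => W (t, q) - ε * lap (fun p' => W (t, p')) q) p)
    (heq2 : ∀ p ∈ disk,
      deriv (fun s => ε * lap (lap (fun p' => P (s, p'))) p - lap (fun p' => P (s, p')) p) t
        = -(1 / R) * lap (lap (fun p' => P (t, p'))) p
          + ε * R * lap (azim (fun p' => W (t, p'))) p
          + jac (fun q => lap (fun p' => P (t, p')) q - ε * lap (lap (fun p' => P (t, p'))) q)
              (fun p' => P (t, p')) p
          + ε * jac (lap (fun p' => W (t, p'))) (fun p' => W (t, p')) p)
    (hbc : ∀ p ∈ bdry, W (t, p) = 0 ∧ P (t, p) = 0 ∧ pdx (fun p' => P (t, p')) p = 0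
      ∧ pdy (fun p' => P (t, p')) p = 0) :
    deriv (fun s => nsq (fun p => W (s, p)) + ε * gradNsq (fun p => W (s, p))
        + gradNsq (fun p => P (s, p)) + ε * nsq (lap (fun p => P (s, p)))) t
      = -(2 / R) * (gradNsq (fun p => W (t, p)) + nsq (lap (fun p => P (t, p))))
        + 2 * R * ip (azim (fun p => P (t, p)))
            (fun q => W (t, q) - ε * lap (fun p' => W (t, p')) q) := by
  -- the equations of motion, in the shape required by `main_spatial`
  have hK1 : ∀ p ∈ disk, dv eT W (t, p) - ε * lap (fun p' => dv eT W (t, p')) p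
      = (1 / R) * lap (fun p' => W (t, p')) p + R * azim (fun p' => P (t, p')) p
        + jac (fun p' => P (t, p'))
            (fun q => (fun p' => W (t, p')) q - ε * lap (fun p' => W (t, p')) q) p := by
    intro p hp
    rw [← deriv_sub_lap hW ε p t]
    exact heq1 p hp
  have hK2 : ∀ p ∈ disk, ε * lap (lap (fun p' => dv eT P (t, p'))) p
        - lap (fun p' => dv eT P (t, p')) p
      = -(1 / R) * lap (lap (fun p' => P (t, p'))) p
        + ε * R * lap (azim (fun p' => W (t, p'))) p
        + jac (fun q => lap (fun p' => P (t, p')) q - ε * lap (lap (fun p' => P (t, p'))) q)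
            (fun p' => P (t, p')) p
        + ε * jac (lap (fun p' => W (t, p'))) (fun p' => W (t, p')) p := by
    intro p hp
    rw [← deriv_lap2 hP ε p t]
    exact heq2 p hp
  have hbd : ∀ p ∈ bdry, (fun p' => W (t, p')) p = 0 ∧ (fun p' => P (t, p')) p = 0
      ∧ pdx (fun p' => P (t, p')) p = 0 ∧ pdy (fun p' => P (t, p')) p = 0 := hbc
  have MS := main_spatial ε R (fun p => W (t, p)) (fun p => dv eT W (t, p))
    (fun p => P (t, p)) (fun p => dv eT P (t, p))
    (SM_restr hW t) (SM_restr (hW.dv eT) t) (SM_restr hP t) (SM_restr (hP.dv eT) t)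
    hK1 hK2 hbd
  -- the density
  set DD : ℝ × (ℝ × ℝ) → ℝ := fun q => W q * W q
      + ε * (dv eX W q * dv eX W q + dv eY W q * dv eY W q)
      + (dv eX P q * dv eX P q + dv eY P q * dv eY P q)
      + ε * ((dv eX (dv eX P) q + dv eY (dv eY P) q) * (dv eX (dv eX P) q + dv eY (dv eY P) q))
    with hDDdef
  have hDD : SM DD := by
    rw [hDDdef]
    simp (config := { maxDischargeDepth := 100 }) only [SM.mul, SM.add, SM.sub, SM.dv,
      SM_const, hW, hP]
  have E1 : (fun s => nsq (fun p => W (s, p)) + ε * gradNsq (fun p => W (s, p))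
      + gradNsq (fun p => P (s, p)) + ε * nsq (lap (fun p => P (s, p))))
      = fun s => ∫ p in disk, DD (s, p) := by
    funext s
    have c1 : Continuous fun p => W (s, p) * W (s, p) :=
      (cont_restr hW s).mul (cont_restr hW s)
    have c2 : Continuous fun p => dv eX W (s, p) * dv eX W (s, p) :=
      (cont_restr (hW.dv eX) s).mul (cont_restr (hW.dv eX) s)
    have c3 : Continuous fun p => dv eY W (s, p) * dv eY W (s, p) :=
      (cont_restr (hW.dv eY) s).mul (cont_restr (hW.dv eY) s)
    have c4 : Continuous fun p => dv eX P (s, p) * dv eX P (s, p) :=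
      (cont_restr (hP.dv eX) s).mul (cont_restr (hP.dv eX) s)
    have c5 : Continuous fun p => dv eY P (s, p) * dv eY P (s, p) :=
      (cont_restr (hP.dv eY) s).mul (cont_restr (hP.dv eY) s)
    have c6 : Continuous fun p => (dv eX (dv eX P) (s, p) + dv eY (dv eY P) (s, p))
        * (dv eX (dv eX P) (s, p) + dv eY (dv eY P) (s, p)) :=
      ((cont_restr ((hP.dv eX).dv eX) s).add (cont_restr ((hP.dv eY).dv eY) s)).mul
        ((cont_restr ((hP.dv eX).dv eX) s).add (cont_restr ((hP.dv eY).dv eY) s))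
    have i1 : IntegrableOn (fun p => W (s, p) * W (s, p)) disk volume := intg c1
    have i2 : IntegrableOn (fun p => ε * (dv eX W (s, p) * dv eX W (s, p)
        + dv eY W (s, p) * dv eY W (s, p))) disk volume := (intg (c2.add c3)).const_mul ε
    have i3 : IntegrableOn (fun p => dv eX P (s, p) * dv eX P (s, p)
        + dv eY P (s, p) * dv eY P (s, p)) disk volume := intg (c4.add c5)
    have i4 : IntegrableOn (fun p => ε * ((dv eX (dv eX P) (s, p) + dv eY (dv eY P) (s, p))
        * (dv eX (dv eX P) (s, p) + dv eY (dv eY P) (s, p)))) disk volume :=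
      (intg c6).const_mul ε
    have split : ∫ p in disk, DD (s, p)
        = (∫ p in disk, W (s, p) * W (s, p))
          + ε * ((∫ p in disk, dv eX W (s, p) * dv eX W (s, p))
            + ∫ p in disk, dv eY W (s, p) * dv eY W (s, p))
          + ((∫ p in disk, dv eX P (s, p) * dv eX P (s, p))
            + ∫ p in disk, dv eY P (s, p) * dv eY P (s, p))
          + ε * ∫ p in disk, ((dv eX (dv eX P) (s, p) + dv eY (dv eY P) (s, p))
            * (dv eX (dv eX P) (s, p) + dv eY (dv eY P) (s, p))) := by
      have i12 : IntegrableOn (fun p => W (s, p) * W (s, p)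
          + ε * (dv eX W (s, p) * dv eX W (s, p) + dv eY W (s, p) * dv eY W (s, p)))
          disk volume := i1.add i2
      have i123 : IntegrableOn (fun p => W (s, p) * W (s, p)
          + ε * (dv eX W (s, p) * dv eX W (s, p) + dv eY W (s, p) * dv eY W (s, p))
          + (dv eX P (s, p) * dv eX P (s, p) + dv eY P (s, p) * dv eY P (s, p)))
          disk volume := i12.add i3
      simp only [hDDdef]
      rw [integral_add i123 i4, integral_add i12 i3,
        integral_add i1 i2, integral_const_mul, integral_const_mul,
        integral_add (intg c2) (intg c3), integral_add (intg c4) (intg c5)]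
    rw [split]
    simp only [gradNsq, nsq, pow_two, pdx_restr hW, pdy_restr hW, pdx_restr hP,
      pdy_restr hP, lap_restr hP]
  rw [E1, (hasDerivAt_setIntegral hDD t).deriv]
  have conv : ∫ p in disk, dv eT DD (t, p)
      = ∫ p in disk, (2*((fun p => W (t, p)) p * (fun p => dv eT W (t, p)) p)
        + 2*ε*(pdx (fun p => W (t, p)) p * pdx (fun p => dv eT W (t, p)) p
          + pdy (fun p => W (t, p)) p * pdy (fun p => dv eT W (t, p)) p)
        + 2*(pdx (fun p => P (t, p)) p * pdx (fun p => dv eT P (t, p)) p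
          + pdy (fun p => P (t, p)) p * pdy (fun p => dv eT P (t, p)) p)
        + 2*ε*(lap (fun p => P (t, p)) p * lap (fun p => dv eT P (t, p)) p)) := by
    refine setIntegral_congr_fun isOpen_disk.measurableSet fun p _ => ?_
    simp (config := { maxDischargeDepth := 100 }) only [hDDdef, pdx_restr hW,
      pdx_restr (hW.dv eT), pdy_restr hW, pdy_restr (hW.dv eT), pdx_restr hP,
      pdx_restr (hP.dv eT), pdy_restr hP, pdy_restr (hP.dv eT), lap_restr hP,
      lap_restr (hP.dv eT), dv_mul, dv_add, dv_sub, dv_cmul, dv_const, dv_TX, dv_TY,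
      SM.dv, SM.mul, SM.add, SM.sub, SM_const, hW, hP]
    ring
  rw [conv, MS]


/-- The basic energy identity of the energy stability analysis:
`dE/dt = −(2/R)I₁ + 2R·I₂` for solutions of the perturbed second grade
Poiseuille flow equations. -/
theorem energy_identity (ε R : ℝ) (hε : 0 ≤ ε) (hR : 0 < R)
    (w ψ : ℝ → ℝ × ℝ → ℝ)
    (hw : ContDiff ℝ (⊤ : ℕ∞) (fun q : ℝ × (ℝ × ℝ) => w q.1 q.2))
    (hψ : ContDiff ℝ (⊤ : ℕ∞) (fun q : ℝ × (ℝ × ℝ) => ψ q.1 q.2))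
    (heq1 : ∀ t : ℝ, ∀ p ∈ disk,
      deriv (fun s => w s p - ε * lap (w s) p) t
        = (1 / R) * lap (w t) p + R * azim (ψ t) p
          + jac (ψ t) (fun q => w t q - ε * lap (w t) q) p)
    (heq2 : ∀ t : ℝ, ∀ p ∈ disk,
      deriv (fun s => ε * lap (lap (ψ s)) p - lap (ψ s) p) t
        = -(1 / R) * lap (lap (ψ t)) p + ε * R * lap (azim (w t)) p
          + jac (fun q => lap (ψ t) q - ε * lap (lap (ψ t)) q) (ψ t) p
          + ε * jac (lap (w t)) (w t) p)
    (hbc : ∀ t : ℝ, ∀ p ∈ bdry,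
      w t p = 0 ∧ ψ t p = 0 ∧ pdx (ψ t) p = 0 ∧ pdy (ψ t) p = 0) :
    ∀ t : ℝ,
      deriv (fun s => nsq (w s) + ε * gradNsq (w s) + gradNsq (ψ s)
        + ε * nsq (lap (ψ s))) t
      = -(2 / R) * (gradNsq (w t) + nsq (lap (ψ t)))
        + 2 * R * ip (azim (ψ t)) (fun q => w t q - ε * lap (w t) q) := by
  intro t
  exact energy_core ε R (fun q => w q.1 q.2) (fun q => ψ q.1 q.2) hw hψ t
    (heq1 t) (heq2 t) (hbc t)
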